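/- Let d ≥ 1 and let Q_d be the graph on vertex set {0,1}^d in which two vertices are adjacent if and only if they differ in exactly one coordinate. For s ∈ {0,1}^d let s̄ denote its antipodal vertex, defined by s̄_i = 1 − s_i for all i. Then there exist unit flows ψ_s from s to s̄ in the network N(Q_d), one for each s ∈ {0,1}^d, such that the total flow Σ_{s ∈ {0,1}^d} ψ_s(a) equals exactly 1 on every arc a of N(Q_d). -/

import Mathlib

open scoped Classical

noncomputable section

/-- A unit flow from `s` to `t` in the network `N(G)`: a nonnegative function on
ordered pairs, supported on arcs of `N(G)`, whose net outflow is `1` at `s`,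
`-1` at `t`, and `0` elsewhere. -/
def IsUnitFlow {V : Type*} [Fintype V] [DecidableEq V] (G : SimpleGraph V)
    (s t : V) (φ : V × V → ℚ) : Prop :=
  (∀ p, 0 ≤ φ p) ∧ (∀ p : V × V, ¬ G.Adj p.1 p.2 → φ p = 0) ∧
  (∀ v : V, (∑ w, φ (v, w)) - (∑ w, φ (w, v)) =
      (if v = s then 1 else 0) - (if v = t then 1 else 0))

/-- The graph `Q_d` of the `d`-cube: vertices are `{0,1}^d`, two vertices being
adjacent iff they differ in exactly one coordinate. -/
def cubeGraph (d : ℕ) : SimpleGraph (Fin d → Bool) where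
  Adj u v := ∃ i, u i ≠ v i ∧ ∀ j, j ≠ i → u j = v j
  symm := by
    constructor
    rintro u v ⟨i, h1, h2⟩
    exact ⟨i, h1.symm, fun j hj => (h2 j hj).symm⟩
  loopless := by constructor; rintro u ⟨i, h, _⟩; exact h rfl

namespace CubeFlowAux

/-- The `k`-th vertex on the canonical path from `s` to its antipode:
flip the first `k` coordinates. -/
def pv (d : ℕ) (s : Fin d → Bool) (k : ℕ) : Fin d → Bool :=
  fun j => if (j : ℕ) < k then !s j else s j

lemma pv_zero (d : ℕ) (s : Fin d → Bool) : pv d s 0 = s := by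
  funext j; simp [pv]

lemma pv_d (d : ℕ) (s : Fin d → Bool) : pv d s d = fun j => ! s j := by
  funext j; simp [pv, j.isLt]

lemma pv_ne_at (d : ℕ) (s : Fin d → Bool) {i : ℕ} (hi : i < d) :
    pv d s i ⟨i, hi⟩ ≠ pv d s (i + 1) ⟨i, hi⟩ := by
  simp [pv]

lemma pv_eq_off (d : ℕ) (s : Fin d → Bool) (i : ℕ) (j : Fin d) (hj : (j : ℕ) ≠ i) :
    pv d s i j = pv d s (i + 1) j := by
  simp only [pv]
  have h : ((j : ℕ) < i) ↔ ((j : ℕ) < i + 1) := by omega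
  split_ifs with h1 h2 <;> first | rfl | omega

lemma adj_pv (d : ℕ) (s : Fin d → Bool) {i : ℕ} (hi : i < d) :
    (cubeGraph d).Adj (pv d s i) (pv d s (i + 1)) := by
  refine ⟨⟨i, hi⟩, pv_ne_at d s hi, fun j hj => ?_⟩
  exact pv_eq_off d s i j (fun h => hj (Fin.ext h))

/-- The flow for source `s`. -/
def ψ (d : ℕ) (s : Fin d → Bool) (p : (Fin d → Bool) × (Fin d → Bool)) : ℚ :=
  ∑ i ∈ Finset.range d, if p.1 = pv d s i ∧ p.2 = pv d s (i + 1) then 1 else 0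

lemma sum_out (d : ℕ) (s v : Fin d → Bool) :
    (∑ w, ψ d s (v, w)) = ∑ i ∈ Finset.range d, if v = pv d s i then (1:ℚ) else 0 := by
  unfold ψ
  rw [Finset.sum_comm]
  refine Finset.sum_congr rfl fun i _ => ?_
  by_cases hv : v = pv d s i
  · simp [hv]
  · simp [hv]

lemma sum_in (d : ℕ) (s v : Fin d → Bool) :
    (∑ w, ψ d s (w, v)) = ∑ i ∈ Finset.range d, if v = pv d s (i + 1) then (1:ℚ) else 0 := by
  unfold ψ
  rw [Finset.sum_comm]
  refine Finset.sum_congr rfl fun i _ => ?_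
  by_cases hv : v = pv d s (i + 1)
  · simp [hv]
  · simp [hv]

end CubeFlowAux

open CubeFlowAux

/-- For `d ≥ 1` there exist unit flows `ψ s` from each vertex
`s` of the `d`-cube to its antipodal vertex `s̄` in the network `N(Q_d)` such
that the total flow `Σ_s ψ s` equals exactly `1` on every arc of `N(Q_d)`. -/
theorem cube_antipodal_flows (d : ℕ) (hd : 1 ≤ d) :
    ∃ ψ : (Fin d → Bool) → ((Fin d → Bool) × (Fin d → Bool) → ℚ),
      (∀ s, IsUnitFlow (cubeGraph d) s (fun i => ! s i) (ψ s)) ∧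
      (∀ p : (Fin d → Bool) × (Fin d → Bool), (cubeGraph d).Adj p.1 p.2 →
        ∑ s : Fin d → Bool, ψ s p = 1) := by
  refine ⟨fun s => CubeFlowAux.ψ d s, fun s => ⟨?_, ?_, ?_⟩, ?_⟩
  · -- nonnegativity
    intro p
    refine Finset.sum_nonneg fun i _ => ?_
    split <;> norm_num
  · -- support on arcs
    rintro ⟨u, v⟩ hadj
    refine Finset.sum_eq_zero fun i hi => ?_
    rw [if_neg]
    rintro ⟨h1, h2⟩
    exact hadj (h1 ▸ h2 ▸ adj_pv d s (Finset.mem_range.mp hi))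
  · -- conservation
    intro v
    rw [sum_out, sum_in, ← Finset.sum_sub_distrib]
    rw [Finset.sum_range_sub' (fun i => if v = pv d s i then (1:ℚ) else 0) d]
    rw [pv_zero, pv_d]
  · -- total flow is 1 on each arc
    rintro ⟨u, v⟩ hadj
    obtain ⟨i0, hne, hagree⟩ := hadj
    unfold CubeFlowAux.ψ
    rw [Finset.sum_comm]
    have hi0 : (i0 : ℕ) ∈ Finset.range d := Finset.mem_range.mpr i0.isLt
    rw [Finset.sum_eq_single_of_mem (i0 : ℕ) hi0 ?side]
    case side =>
      intro i hi hne'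
      refine Finset.sum_eq_zero fun s _ => ?_
      rw [if_neg]
      rintro ⟨h1, h2⟩
      have hi' : i < d := Finset.mem_range.mp hi
      have hfin : (⟨i, hi'⟩ : Fin d) ≠ i0 := by
        intro h; exact hne' (congrArg Fin.val h)
      have := pv_ne_at d s hi'
      rw [← h1, ← h2] at this
      exact this (hagree _ hfin)
    -- now the main term
    set s0 : Fin d → Bool := fun j => if (j : ℕ) < (i0 : ℕ) then !u j else u j with hs0
    have key : ∀ s : Fin d → Bool,
        (u = pv d s (i0 : ℕ) ∧ v = pv d s ((i0 : ℕ) + 1)) ↔ s = s0 := by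
      intro s
      constructor
      · rintro ⟨h1, _⟩
        funext j
        have hu : u j = if (j : ℕ) < (i0 : ℕ) then !s j else s j := by
          rw [h1]; rfl
        simp only [hs0, hu]
        by_cases hj : (j : ℕ) < (i0 : ℕ) <;> simp [hj]
      · rintro rfl
        have hne' : u i0 ≠ v i0 := hne
        have hv0 : v i0 = !u i0 := by
          revert hne'; cases u i0 <;> cases v i0 <;> simp
        constructor
        · funext j
          simp only [pv, hs0]
          by_cases hj : (j : ℕ) < (i0 : ℕ) <;> simp [hj]
        · funext j
          simp only [pv, hs0]
          rcases lt_trichotomy (j : ℕ) (i0 : ℕ) with h | h | h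
          · have h' : (j : ℕ) < (i0 : ℕ) + 1 := by omega
            simp only [if_pos h, if_pos h', Bool.not_not]
            exact (hagree j (fun hh => absurd (congrArg Fin.val hh) (by omega))).symm
          · have hj0 : j = i0 := Fin.ext h
            subst hj0
            simp only [if_pos (by omega : (j : ℕ) < (j : ℕ) + 1),
              if_neg (by omega : ¬ (j : ℕ) < (j : ℕ))]
            exact hv0
          · have h1 : ¬ (j : ℕ) < (i0 : ℕ) := by omega
            have h2 : ¬ (j : ℕ) < (i0 : ℕ) + 1 := by omega
            simp only [if_neg h1, if_neg h2]
            exact (hagree j (fun hh => by rw [hh] at h; omega)).symm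
    show (∑ s : Fin d → Bool, if u = pv d s (i0:ℕ) ∧ v = pv d s ((i0:ℕ)+1) then (1:ℚ) else 0) = 1
    calc (∑ s : Fin d → Bool, if u = pv d s (i0:ℕ) ∧ v = pv d s ((i0:ℕ)+1) then (1:ℚ) else 0)
        = ∑ s : Fin d → Bool, if s = s0 then (1:ℚ) else 0 := by
          refine Finset.sum_congr rfl fun s _ => ?_
          exact if_congr (key s) rfl rfl
      _ = 1 := by simp
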